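/- Let C ⊂ ℝⁿ be a compact convex set, f₁ σ₁-strongly convex and f₂ σ₂-strongly convex differentiable functions with ‖∇f_i(x)‖ ≤ L for all x ∈ C. If x₀ is an interior point of C minimizing f₁ + f₂ over C (so ∇f₁(x₀) = −∇f₂(x₀)), then ‖∇f₁(x₀)‖ = ‖∇f₂(x₀)‖ ≤ L − min(σ₁, σ₂)·d(x₀, ∂C). -/

import Mathlib

set_option maxHeartbeats 1000000


open Real

/-- If `f₁, f₂` are strongly convex with `‖∇fᵢ‖ ≤ L` on a compact convex set `C`, and the
interior point `x₀` minimizes `f₁ + f₂` over `C` (so `∇f₁(x₀) = -∇f₂(x₀)`), then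
`‖∇f₁(x₀)‖ = ‖∇f₂(x₀)‖ ≤ L - min(σ₁, σ₂)·d(x₀, ∂C)`. -/
theorem stmt16 {n : ℕ} (σ₁ σ₂ L : ℝ) (hσ₁ : 0 < σ₁) (hσ₂ : 0 < σ₂) (hL : 0 ≤ L)
    (C : Set (EuclideanSpace ℝ (Fin n))) (hC : IsCompact C) (hconv : Convex ℝ C)
    (f₁ f₂ : EuclideanSpace ℝ (Fin n) → ℝ)
    (f₁' f₂' : EuclideanSpace ℝ (Fin n) → EuclideanSpace ℝ (Fin n))
    (hd₁ : ∀ x, HasGradientAt f₁ (f₁' x) x)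
    (hd₂ : ∀ x, HasGradientAt f₂ (f₂' x) x)
    (hsc₁ : ∀ x y, σ₁ * ‖x - y‖ ^ 2 ≤ (inner ℝ (f₁' x - f₁' y) (x - y) : ℝ))
    (hsc₂ : ∀ x y, σ₂ * ‖x - y‖ ^ 2 ≤ (inner ℝ (f₂' x - f₂' y) (x - y) : ℝ))
    (hg₁ : ∀ x ∈ C, ‖f₁' x‖ ≤ L) (hg₂ : ∀ x ∈ C, ‖f₂' x‖ ≤ L)
    (x₀ : EuclideanSpace ℝ (Fin n)) (hx₀ : x₀ ∈ interior C)
    (hmin : IsMinOn (f₁ + f₂) C x₀) :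
    ‖f₁' x₀‖ = ‖f₂' x₀‖ ∧
      ‖f₁' x₀‖ ≤ L - min σ₁ σ₂ * Metric.infDist x₀ (frontier C) := by
  classical
  have hx₀C : x₀ ∈ C := interior_subset hx₀
  -- the gradients sum to zero at x₀
  have hsum : f₁' x₀ + f₂' x₀ = 0 := by
    have hloc : IsLocalMin (f₁ + f₂) x₀ :=
      hmin.isLocalMin (mem_interior_iff_mem_nhds.mp hx₀)
    have hF : HasFDerivAt (f₁ + f₂)
        ((InnerProductSpace.toDual ℝ _) (f₁' x₀) + (InnerProductSpace.toDual ℝ _) (f₂' x₀)) x₀ :=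
      (hd₁ x₀).hasFDerivAt.add (hd₂ x₀).hasFDerivAt
    have h0 := hloc.hasFDerivAt_eq_zero hF
    have h1 : (InnerProductSpace.toDual ℝ _) (f₁' x₀ + f₂' x₀) = 0 := by
      rw [map_add]; exact h0
    have h2 : (InnerProductSpace.toDual ℝ _) (f₁' x₀ + f₂' x₀)
        = (InnerProductSpace.toDual ℝ _) 0 := by simpa using h1
    exact (InnerProductSpace.toDual ℝ _).injective h2
  have heq : f₁' x₀ = -(f₂' x₀) := eq_neg_of_add_eq_zero_left hsum
  have hnorm : ‖f₁' x₀‖ = ‖f₂' x₀‖ := by rw [heq, norm_neg]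
  refine ⟨hnorm, ?_⟩
  set d : ℝ := Metric.infDist x₀ (frontier C) with hd
  set g : ℝ := ‖f₁' x₀‖ with hg
  set σ : ℝ := min σ₁ σ₂ with hσdef
  have hσ : 0 < σ := lt_min hσ₁ hσ₂
  have hσσ₁ : σ ≤ σ₁ := min_le_left _ _
  have hgL : g ≤ L := hg₁ x₀ hx₀C
  have hd0 : 0 ≤ d := Metric.infDist_nonneg
  -- key claim
  have key : ∀ t : ℝ, 0 ≤ t → t < d → g + σ * t ≤ L := by
    intro t ht0 htd
    have hdpos : 0 < d := lt_of_le_of_lt ht0 htd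
    have hfne : (frontier C).Nonempty := by
      by_contra h
      rw [Set.not_nonempty_iff_eq_empty] at h
      rw [hd, h, Metric.infDist_empty] at hdpos
      exact lt_irrefl _ hdpos
    have hCne : C ≠ Set.univ := by
      intro h
      rw [h, frontier_univ] at hfne
      exact Set.not_nonempty_empty hfne
    -- points within distance d of x₀ are in C
    have hball : ∀ y, dist x₀ y < d → y ∈ C := by
      intro y hy
      by_contra hyC
      obtain ⟨z, hz, hzd⟩ := exists_mem_frontier_infDist_compl_eq_dist hx₀C hCne
      have h1 : d ≤ dist x₀ z := Metric.infDist_le_dist_of_mem hz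
      have h2 : Metric.infDist x₀ Cᶜ ≤ dist x₀ y := Metric.infDist_le_dist_of_mem hyC
      rw [hzd] at h2
      linarith
    by_cases hg0 : g = 0
    · -- zero gradient: use a frontier point
      obtain ⟨z, hz⟩ := hfne
      have hzC : z ∈ C := by
        have := frontier_subset_closure (s := C) hz
        rwa [hC.isClosed.closure_eq] at this
      have hzd : d ≤ dist x₀ z := Metric.infDist_le_dist_of_mem hz
      have hz0 : f₁' x₀ = 0 := by rwa [hg, norm_eq_zero] at hg0
      have hsc := hsc₁ z x₀
      rw [hz0, sub_zero] at hsc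
      have hib : (inner ℝ (f₁' z) (z - x₀) : ℝ) ≤ ‖f₁' z‖ * ‖z - x₀‖ := real_inner_le_norm _ _
      have hLz : ‖f₁' z‖ ≤ L := hg₁ z hzC
      have hzn : dist x₀ z = ‖z - x₀‖ := by rw [dist_comm, dist_eq_norm]
      have hzpos : 0 < ‖z - x₀‖ := by rw [← hzn]; linarith
      have hb : σ₁ * ‖z - x₀‖ ≤ L := by
        nlinarith [norm_nonneg (f₁' z)]
      have : σ * t ≤ σ₁ * ‖z - x₀‖ := by
        have h1 : σ * t ≤ σ₁ * t := by nlinarith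
        have h2 : σ₁ * t ≤ σ₁ * ‖z - x₀‖ := by nlinarith
        linarith
      rw [hg0]; simp only [zero_add]; linarith
    · -- nonzero gradient: move in the gradient direction
      have hgpos : 0 < g := lt_of_le_of_ne (norm_nonneg _) (Ne.symm hg0)
      set u : EuclideanSpace ℝ (Fin n) := (g⁻¹ * t) • f₁' x₀ with hu
      have hnu : ‖u‖ = t := by
        rw [hu, norm_smul, ← hg]
        rw [Real.norm_eq_abs, abs_of_nonneg (by positivity)]
        field_simp
      set x : EuclideanSpace ℝ (Fin n) := x₀ + u with hx
      have hxC : x ∈ C := by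
        apply hball
        rw [dist_eq_norm, hx]
        rw [show x₀ - (x₀ + u) = -u by abel, norm_neg, hnu]
        exact htd
      have hsc := hsc₁ x x₀
      have hxsub : x - x₀ = u := by rw [hx]; abel
      rw [hxsub, hnu] at hsc
      have hinner : (inner ℝ (f₁' x - f₁' x₀) u : ℝ)
          = (inner ℝ (f₁' x) u : ℝ) - (g⁻¹ * t) * g ^ 2 := by
        rw [inner_sub_left, hu, real_inner_smul_right, real_inner_smul_right,
          real_inner_self_eq_norm_sq, ← hg]
      have hib : (inner ℝ (f₁' x) u : ℝ) ≤ ‖f₁' x‖ * ‖u‖ := real_inner_le_norm _ _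
      have hLx : ‖f₁' x‖ ≤ L := hg₁ x hxC
      rw [hnu] at hib
      have hgg : (g⁻¹ * t) * g ^ 2 = t * g := by field_simp
      rw [hinner, hgg] at hsc
      -- σ₁ t² ≤ ⟨f₁'x, u⟩ - t g ≤ L t - t g
      rcases eq_or_lt_of_le ht0 with h | h
      · rw [← h]; simpa using hgL
      · have : σ₁ * t ^ 2 ≤ L * t - t * g := by nlinarith [norm_nonneg (f₁' x)]
        nlinarith
  -- pass to the limit t → d
  by_contra hcon
  push_neg at hcon
  have h2 : (L - g) / σ < d := by rw [div_lt_iff₀ hσ]; nlinarith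
  set t : ℝ := ((L - g) / σ + d) / 2 with htdef
  have ht1 : (L - g) / σ < t := by rw [htdef]; linarith
  have ht2 : t < d := by rw [htdef]; linarith
  have ht0 : 0 ≤ t := le_trans (div_nonneg (by linarith) hσ.le) ht1.le
  have hk := key t ht0 ht2
  have : σ * ((L - g) / σ) < σ * t := by nlinarith
  rw [mul_div_cancel₀ _ hσ.ne'] at this
  linarith
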